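/- Let V = EuclideanSpace ℝ (Fin n), Ω ⊆ V a nonempty proper open convex cone, φ the characteristic function of Ω, and ψ(ω) = ω* := −∇(log φ)(ω) the dual map. Then for all ω ∈ Ω one has ⟪ω, ω*⟫ = n = dim_ℝ V. -/

import Mathlib

open Set Filter
open scoped Pointwise RealInnerProductSpace

/-- A subset `C` of a real vector space is a cone if `t • x ∈ C` for all `x ∈ C`, `t > 0`. -/
def IsCone {V : Type*} [AddCommGroup V] [Module ℝ V] (C : Set V) : Prop :=
  ∀ x ∈ C, ∀ t : ℝ, 0 < t → t • x ∈ C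

/-- The open dual cone of an open cone `Ω` with respect to the inner product. -/
def openDualCone {V : Type*} [NormedAddCommGroup V] [InnerProductSpace ℝ V] (Ω : Set V) :
    Set V :=
  {v | ∀ ω ∈ closure Ω, ω ≠ 0 → 0 < ⟪v, ω⟫}

open MeasureTheory

/-- The characteristic function of a proper open convex cone `Ω ⊆ EuclideanSpace ℝ (Fin n)`:
`φ(ω) = ∫_{Ω*} exp (−⟪ω, y⟫) dy`, the integral over the open dual cone with respect to
Lebesgue measure. -/
noncomputable def charFun {n : ℕ} (Ω : Set (EuclideanSpace ℝ (Fin n)))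
    (ω : EuclideanSpace ℝ (Fin n)) : ℝ :=
  ∫ y in openDualCone Ω, Real.exp (-⟪ω, y⟫)

/-- The dual map `ψ(ω) = ω* := −∇(log φ)(ω)` of a cone `Ω`, where `φ` is its characteristic
function and the gradient is taken with respect to the inner product. -/
noncomputable def dualMap {n : ℕ} (Ω : Set (EuclideanSpace ℝ (Fin n)))
    (ω : EuclideanSpace ℝ (Fin n)) : EuclideanSpace ℝ (Fin n) :=
  -gradient (fun x => Real.log (charFun Ω x)) ω

open Metric

section Aux

variable {n : ℕ} {Ω : Set (EuclideanSpace ℝ (Fin n))}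

lemma smul_mem_openDualCone {y : EuclideanSpace ℝ (Fin n)} (hy : y ∈ openDualCone Ω)
    {t : ℝ} (ht : 0 < t) : t • y ∈ openDualCone Ω := fun x hx hx0 => by
  rw [real_inner_smul_left]
  exact mul_pos ht (hy x hx hx0)

lemma smul_mem_openDualCone_iff {y : EuclideanSpace ℝ (Fin n)} {t : ℝ} (ht : 0 < t) :
    t • y ∈ openDualCone Ω ↔ y ∈ openDualCone Ω := by
  constructor
  · intro h
    have := smul_mem_openDualCone h (inv_pos.2 ht)
    simpa [smul_smul, inv_mul_cancel₀ ht.ne'] using this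
  · exact fun h => smul_mem_openDualCone h ht

lemma convex_openDualCone : Convex ℝ (openDualCone Ω) := by
  intro y1 h1 y2 h2 a b ha hb hab
  intro x hx hx0
  have p1 := h1 x hx hx0
  have p2 := h2 x hx hx0
  rw [inner_add_left, real_inner_smul_left, real_inner_smul_left]
  rcases ha.lt_or_eq with ha' | ha'
  · nlinarith [mul_nonneg hb p2.le]
  · have hb1 : b = 1 := by linarith
    rw [← ha', hb1]
    nlinarith

lemma inner_ge_of_mem_openDualCone {ω : EuclideanSpace ℝ (Fin n)} {ε : ℝ} (hε : 0 < ε)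
    (hsub : ball ω ε ⊆ Ω) {y : EuclideanSpace ℝ (Fin n)} (hy : y ∈ openDualCone Ω) :
    ε * ‖y‖ ≤ ⟪y, ω⟫ := by
  rcases eq_or_ne y 0 with rfl | hy0
  · simp
  have hclosed : closedBall ω ε ⊆ closure Ω := by
    rw [← closure_ball ω hε.ne']
    exact closure_mono hsub
  set u : EuclideanSpace ℝ (Fin n) := ‖y‖⁻¹ • y with hu
  have hun : ‖u‖ = 1 := norm_smul_inv_norm hy0
  have hny : (0:ℝ) < ‖y‖ := norm_pos_iff.mpr hy0
  have hzmem : ω - ε • u ∈ closure Ω := by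
    apply hclosed
    rw [mem_closedBall, dist_eq_norm]
    simp only [sub_sub_cancel_left, norm_neg, norm_smul, hun, Real.norm_eq_abs,
      abs_of_pos hε, mul_one, le_refl]
  have key : ⟪y, ε • u⟫ = ε * ‖y‖ := by
    rw [hu, real_inner_smul_right, real_inner_smul_right, real_inner_self_eq_norm_mul_norm]
    field_simp
  rcases eq_or_ne (ω - ε • u) 0 with hz | hz
  · have hω : ω = ε • u := by rwa [sub_eq_zero] at hz
    rw [hω, key]
  · have hpos := hy _ hzmem hz
    rw [inner_sub_right, key] at hpos
    linarith

lemma integrable_pow_mul_exp {c : ℝ} (hc : 0 < c) (k : ℕ) :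
    Integrable (fun y : EuclideanSpace ℝ (Fin n) =>
      (1 + ‖y‖) ^ k * Real.exp (-(c * ‖y‖))) volume := by
  set K : ℕ := n + 1 + k with hK
  set C : ℝ := 2 ^ K * (1 + K.factorial / c ^ K) with hC
  have hcK : (0:ℝ) < c ^ K := pow_pos hc K
  have key : ∀ t : ℝ, 0 ≤ t → (1 + t) ^ K ≤ C * Real.exp (c * t) := by
    intro t ht
    have h1 : (1:ℝ) + t ≤ 2 * max 1 t := by
      have h1a := le_max_left (1:ℝ) t
      have h1b := le_max_right (1:ℝ) t
      linarith
    have h2 : (1 + t) ^ K ≤ (2 * max 1 t) ^ K := by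
      apply pow_le_pow_left₀ (by linarith) h1
    have h4 : (max 1 t) ^ K ≤ 1 + t ^ K := by
      rcases le_total t 1 with h | h
      · rw [max_eq_left h, one_pow]
        have : (0:ℝ) ≤ t ^ K := pow_nonneg ht K
        linarith
      · rw [max_eq_right h]
        nlinarith
    have h5 : t ^ K ≤ K.factorial / c ^ K * Real.exp (c * t) := by
      have hfac : (0:ℝ) < (K.factorial : ℝ) := Nat.cast_pos.mpr (Nat.factorial_pos K)
      have h5a := Real.pow_div_factorial_le_exp (c * t) (mul_nonneg hc.le ht) K
      rw [div_le_iff₀ hfac] at h5a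
      rw [div_mul_eq_mul_div, le_div_iff₀ hcK]
      calc t ^ K * c ^ K = (c * t) ^ K := by rw [mul_pow, mul_comm]
        _ ≤ Real.exp (c * t) * K.factorial := h5a
        _ = (K.factorial : ℝ) * Real.exp (c * t) := mul_comm _ _
    have h6 : (1:ℝ) ≤ Real.exp (c * t) := Real.one_le_exp (by positivity)
    calc (1 + t) ^ K ≤ (2 * max 1 t) ^ K := h2
      _ = 2 ^ K * (max 1 t) ^ K := mul_pow _ _ _
      _ ≤ 2 ^ K * (1 + t ^ K) := by
          apply mul_le_mul_of_nonneg_left h4 (by positivity)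
      _ ≤ 2 ^ K * (1 * Real.exp (c * t) + K.factorial / c ^ K * Real.exp (c * t)) := by
          apply mul_le_mul_of_nonneg_left _ (by positivity)
          rw [one_mul]
          exact add_le_add h6 h5
      _ = C * Real.exp (c * t) := by rw [hC]; ring
  have hr' : (Module.finrank ℝ (EuclideanSpace ℝ (Fin n)) : ℝ) < (n : ℝ) + 1 := by
    rw [finrank_euclideanSpace_fin]
    exact lt_add_one _
  refine ((integrable_one_add_norm (μ := (volume : Measure (EuclideanSpace ℝ (Fin n))))
    hr').const_mul C).mono' ?_ (Eventually.of_forall fun y => ?_)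
  · exact Continuous.aestronglyMeasurable (by fun_prop)
  · set t : ℝ := ‖y‖ with htdef
    have ht : 0 ≤ t := norm_nonneg y
    have hpos : (0:ℝ) < 1 + t := by linarith
    have hnat : (1 + t) ^ ((n : ℝ) + 1) = (1 + t) ^ (n + 1 : ℕ) := by
      rw [← Real.rpow_natCast (1+t) (n+1)]
      push_cast
      ring_nf
    rw [Real.norm_eq_abs, abs_of_nonneg (by positivity)]
    rw [Real.rpow_neg hpos.le, hnat, ← div_eq_mul_inv, le_div_iff₀ (by positivity)]
    calc (1 + t) ^ k * Real.exp (-(c * t)) * (1 + t) ^ (n + 1)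
        = (1 + t) ^ K * Real.exp (-(c * t)) := by
          rw [mul_right_comm, ← pow_add]
          congr 2
          omega
      _ ≤ (C * Real.exp (c * t)) * Real.exp (-(c * t)) := by
          apply mul_le_mul_of_nonneg_right (key t ht) (Real.exp_pos _).le
      _ = C := by rw [mul_assoc, ← Real.exp_add]; simp

lemma integrable_exp_norm {c : ℝ} (hc : 0 < c) :
    Integrable (fun y : EuclideanSpace ℝ (Fin n) => Real.exp (-(c * ‖y‖))) volume := by
  simpa using integrable_pow_mul_exp hc 0

lemma integrable_norm_mul_exp {c : ℝ} (hc : 0 < c) :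
    Integrable (fun y : EuclideanSpace ℝ (Fin n) => ‖y‖ * Real.exp (-(c * ‖y‖))) volume := by
  refine (integrable_pow_mul_exp hc 1).mono'
    (Continuous.aestronglyMeasurable (by fun_prop)) (Eventually.of_forall fun y => ?_)
  rw [Real.norm_eq_abs, abs_of_nonneg (by positivity), pow_one]
  have : ‖y‖ ≤ 1 + ‖y‖ := by linarith [norm_nonneg y]
  exact mul_le_mul_of_nonneg_right this (Real.exp_pos _).le

end Aux

section Aux2

variable {n : ℕ} {Ω : Set (EuclideanSpace ℝ (Fin n))}

lemma exists_ball_subset_openDualCone (hne : Ω.Nonempty) (hconv : Convex ℝ Ω)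
    (hcone : IsCone Ω) (hproper : closure Ω ∩ -closure Ω = {0}) :
    ∃ (v : EuclideanSpace ℝ (Fin n)) (r : ℝ), 0 < r ∧ ball v r ⊆ openDualCone Ω := by
  classical
  have hsmul : ∀ ⦃c : ℝ⦄, 0 < c → ∀ ⦃x : EuclideanSpace ℝ (Fin n)⦄,
      x ∈ closure Ω → c • x ∈ closure Ω := by
    intro c hc x hx
    exact map_mem_closure (continuous_const_smul c) hx (fun y hy => hcone y hy c hc)
  have hadd : ∀ ⦃x : EuclideanSpace ℝ (Fin n)⦄, x ∈ closure Ω →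
      ∀ ⦃y : EuclideanSpace ℝ (Fin n)⦄, y ∈ closure Ω → x + y ∈ closure Ω := by
    intro x hx y hy
    have hmid : (1/2 : ℝ) • x + (1/2 : ℝ) • y ∈ closure Ω :=
      hconv.closure hx hy (by norm_num) (by norm_num) (by norm_num)
    have h2 := hsmul (by norm_num : (0:ℝ) < 2) hmid
    have : (2:ℝ) • ((1/2 : ℝ) • x + (1/2 : ℝ) • y) = x + y := by
      rw [smul_add, smul_smul, smul_smul]
      norm_num
    rwa [this] at h2
  set K : ConvexCone ℝ (EuclideanSpace ℝ (Fin n)) :=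
    { carrier := closure Ω
      smul_mem' := fun c hc x hx => hsmul hc hx
      add_mem' := fun x hx y hy => hadd hx hy } with hKdef
  have hKne : (K : Set (EuclideanSpace ℝ (Fin n))).Nonempty := by
    obtain ⟨x, hx⟩ := hne
    exact ⟨x, subset_closure hx⟩
  have hKcl : IsClosed (K : Set (EuclideanSpace ℝ (Fin n))) := isClosed_closure
  have h0' : (0 : EuclideanSpace ℝ (Fin n)) ∈ closure Ω ∩ -closure Ω :=
    hproper ▸ Set.mem_singleton (0 : EuclideanSpace ℝ (Fin n))
  let PC : ProperCone ℝ (EuclideanSpace ℝ (Fin n)) :=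
    { carrier := closure Ω
      add_mem' := fun hx hy => hadd hx hy
      zero_mem' := h0'.1
      smul_mem' := fun c x hx => by
        rcases eq_or_ne c 0 with rfl | hc
        · simpa using h0'.1
        · exact hsmul (NNReal.coe_pos.mpr (pos_iff_ne_zero.mpr hc)) hx
      isClosed' := isClosed_closure }
  have hdd := ProperCone.innerDual_innerDual PC
  set Dc : Set (EuclideanSpace ℝ (Fin n)) :=
    (ProperCone.innerDual (PC : Set (EuclideanSpace ℝ (Fin n))) : Set (EuclideanSpace ℝ (Fin n))) with hDc
  have hDcConv : Convex ℝ Dc := fun a ha b hb s t hs ht _ =>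
    ProperCone.mem_innerDual.mpr fun x hx => by
      rw [inner_add_right, real_inner_smul_right, real_inner_smul_right]
      exact add_nonneg (mul_nonneg hs (ProperCone.mem_innerDual.mp ha hx))
        (mul_nonneg ht (ProperCone.mem_innerDual.mp hb hx))
  have h0Dc : (0 : EuclideanSpace ℝ (Fin n)) ∈ Dc :=
    zero_mem (ProperCone.innerDual (PC : Set (EuclideanSpace ℝ (Fin n))))
  by_cases hint : (interior Dc).Nonempty
  · obtain ⟨v, hv⟩ := hint
    obtain ⟨r, hr, hball⟩ := Metric.isOpen_iff.mp isOpen_interior v hv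
    refine ⟨v, r/2, by positivity, ?_⟩
    intro w hw x hx hx0
    have hx' : x ∈ (K : Set (EuclideanSpace ℝ (Fin n))) := hx
    set u : EuclideanSpace ℝ (Fin n) := ‖x‖⁻¹ • x with hu
    have hun : ‖u‖ = 1 := norm_smul_inv_norm hx0
    have hnx : (0:ℝ) < ‖x‖ := norm_pos_iff.mpr hx0
    have hw' : w - (r/2) • u ∈ interior Dc := by
      apply hball
      rw [mem_ball] at hw ⊢
      calc dist (w - (r/2) • u) v ≤ dist (w - (r/2) • u) w + dist w v := dist_triangle _ _ _
        _ < r/2 + r/2 := by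
            apply add_lt_add_of_le_of_lt _ hw
            rw [dist_eq_norm]
            simp only [sub_sub_cancel_left, norm_neg, norm_smul, hun, Real.norm_eq_abs, mul_one]
            rw [abs_of_pos (by positivity)]
        _ = r := by ring
    have hDmem : w - (r/2) • u ∈ Dc := interior_subset hw'
    have hge := ProperCone.mem_innerDual.mp hDmem hx'
    have hxu : ⟪x, u⟫ = ‖x‖ := by
      rw [hu, real_inner_smul_right, real_inner_self_eq_norm_mul_norm]
      field_simp
    rw [inner_sub_right, real_inner_smul_right, hxu] at hge
    rw [real_inner_comm]
    nlinarith
  · exfalso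
    have hspan : affineSpan ℝ Dc ≠ ⊤ := by
      intro h
      exact hint ((hDcConv.interior_nonempty_iff_affineSpan_eq_top).mpr h)
    have hW : Submodule.span ℝ Dc ≠ ⊤ := by
      intro htop
      apply hspan
      rw [AffineSubspace.affineSpan_eq_top_iff_vectorSpan_eq_top_of_nonempty ℝ (EuclideanSpace ℝ (Fin n)) (EuclideanSpace ℝ (Fin n)) ⟨0, h0Dc⟩, eq_top_iff, ← htop]
      apply Submodule.span_le.mpr
      intro v hv
      have := vsub_mem_vectorSpan ℝ hv h0Dc
      simpa using this
    obtain ⟨u, huW, hu0⟩ := Submodule.exists_mem_ne_zero_of_ne_bot (p := (Submodule.span ℝ Dc)ᗮ)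
      (by rw [Ne, Submodule.orthogonal_eq_bot_iff]; exact hW)
    have hu0' : ∀ v ∈ Dc, ⟪v, u⟫ = 0 := fun v hv =>
      ((Submodule.mem_orthogonal _ u).mp huW) v (Submodule.subset_span hv)
    have humem : u ∈ ProperCone.innerDual Dc :=
      ProperCone.mem_innerDual.mpr (fun x hx => le_of_eq (hu0' x hx).symm)
    have hnegmem : -u ∈ ProperCone.innerDual Dc := by
      apply ProperCone.mem_innerDual.mpr
      intro x hx
      rw [inner_neg_right, hu0' x hx, neg_zero]
    rw [hDc, hdd] at humem hnegmem
    have hmem : u ∈ closure Ω ∩ -closure Ω := by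
      refine ⟨humem, ?_⟩
      rw [Set.mem_neg]
      exact hnegmem
    rw [hproper] at hmem
    exact hu0 hmem

end Aux2

section Aux3

variable {n : ℕ} {Ω : Set (EuclideanSpace ℝ (Fin n))}

lemma setIntegral_eq_integral_indicator {s : Set (EuclideanSpace ℝ (Fin n))}
    (hs : NullMeasurableSet s (volume : Measure (EuclideanSpace ℝ (Fin n))))
    (f : EuclideanSpace ℝ (Fin n) → ℝ) :
    ∫ y in s, f y = ∫ y, s.indicator f y := by
  have h1 : toMeasurable volume s =ᵐ[volume] s := NullMeasurableSet.toMeasurable_ae_eq hs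
  rw [← Measure.restrict_congr_set h1, ← integral_indicator (measurableSet_toMeasurable _ _)]
  refine integral_congr_ae ?_
  filter_upwards [eventuallyEq_set.mp h1] with y hy
  by_cases hmem : y ∈ s
  · rw [Set.indicator_of_mem (hy.mpr hmem), Set.indicator_of_mem hmem]
  · rw [Set.indicator_of_notMem (fun h => hmem (hy.mp h)), Set.indicator_of_notMem hmem]

lemma nullMeasurable_openDualCone :
    NullMeasurableSet (openDualCone Ω) (volume : Measure (EuclideanSpace ℝ (Fin n))) :=
  convex_openDualCone.nullMeasurableSet _

lemma charFun_smul (x : EuclideanSpace ℝ (Fin n)) {t : ℝ} (ht : 0 < t) :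
    charFun Ω (t • x) = (t ^ n)⁻¹ * charFun Ω x := by
  have hD : NullMeasurableSet (openDualCone Ω) (volume : Measure (EuclideanSpace ℝ (Fin n))) :=
    nullMeasurable_openDualCone
  rw [_root_.charFun, _root_.charFun, setIntegral_eq_integral_indicator hD, setIntegral_eq_integral_indicator hD]
  have step : ∀ y : EuclideanSpace ℝ (Fin n),
      (openDualCone Ω).indicator (fun y => Real.exp (-⟪t • x, y⟫)) y
      = (openDualCone Ω).indicator (fun z => Real.exp (-⟪x, z⟫)) (t • y) := by
    intro y
    by_cases hy : y ∈ openDualCone Ω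
    · rw [Set.indicator_of_mem hy, Set.indicator_of_mem ((smul_mem_openDualCone_iff ht).mpr hy)]
      rw [real_inner_smul_left, real_inner_smul_right]
    · rw [Set.indicator_of_notMem hy,
        Set.indicator_of_notMem (fun h => hy ((smul_mem_openDualCone_iff ht).mp h))]
  calc ∫ y, (openDualCone Ω).indicator (fun y => Real.exp (-⟪t • x, y⟫)) y
      = ∫ y, (openDualCone Ω).indicator (fun z => Real.exp (-⟪x, z⟫)) (t • y) := by
        simp_rw [step]
    _ = |(t ^ Module.finrank ℝ (EuclideanSpace ℝ (Fin n)))⁻¹| •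
          ∫ z, (openDualCone Ω).indicator (fun z => Real.exp (-⟪x, z⟫)) z :=
        Measure.integral_comp_smul volume _ t
    _ = (t ^ n)⁻¹ * ∫ z, (openDualCone Ω).indicator (fun z => Real.exp (-⟪x, z⟫)) z := by
        rw [finrank_euclideanSpace_fin, abs_of_pos (inv_pos.mpr (pow_pos ht n)), smul_eq_mul]

lemma integrableOn_exp_dual {x : EuclideanSpace ℝ (Fin n)} {ε : ℝ} (hε : 0 < ε)
    (hsub : ball x ε ⊆ Ω) :
    IntegrableOn (fun y => Real.exp (-⟪x, y⟫)) (openDualCone Ω)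
      (volume : Measure (EuclideanSpace ℝ (Fin n))) := by
  refine Integrable.mono' ((integrable_exp_norm hε).restrict (s := openDualCone Ω))
    (Continuous.aestronglyMeasurable
      (Real.continuous_exp.comp ((continuous_const.inner continuous_id).neg))) ?_
  filter_upwards [ae_restrict_mem₀ nullMeasurable_openDualCone] with y hy
  rw [Real.norm_eq_abs, Real.abs_exp, Real.exp_le_exp]
  have := inner_ge_of_mem_openDualCone hε hsub hy
  rw [real_inner_comm] at this
  linarith

lemma charFun_pos (hne : Ω.Nonempty) (hopen : IsOpen Ω) (hconv : Convex ℝ Ω)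
    (hcone : IsCone Ω) (hproper : closure Ω ∩ -closure Ω = {0})
    {ω : EuclideanSpace ℝ (Fin n)} (hω : ω ∈ Ω) : 0 < charFun Ω ω := by
  obtain ⟨ε, hε, hsub⟩ := Metric.isOpen_iff.mp hopen ω hω
  have hInt := integrableOn_exp_dual hε hsub
  obtain ⟨v, r, hr, hball⟩ := exists_ball_subset_openDualCone hne hconv hcone hproper
  rw [_root_.charFun, setIntegral_pos_iff_support_of_nonneg_ae
    (Eventually.of_forall fun y => (Real.exp_pos _).le) hInt]
  have hsupp : (Function.support fun y : EuclideanSpace ℝ (Fin n) => Real.exp (-⟪ω, y⟫)) = univ := by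
    ext y
    simp [Function.mem_support, Real.exp_ne_zero]
  rw [hsupp, univ_inter]
  exact lt_of_lt_of_le (measure_ball_pos volume v hr) (measure_mono hball)

end Aux3

section Aux4

variable {n : ℕ} {Ω : Set (EuclideanSpace ℝ (Fin n))}

lemma differentiableAt_charFun (hopen : IsOpen Ω) {ω : EuclideanSpace ℝ (Fin n)} (hω : ω ∈ Ω) :
    DifferentiableAt ℝ (charFun Ω) ω := by
  obtain ⟨ε, hε, hsub⟩ := Metric.isOpen_iff.mp hopen ω hω
  set r : ℝ := ε / 2 with hrdef
  have hr : 0 < r := by positivity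
  set D : Set (EuclideanSpace ℝ (Fin n)) := openDualCone Ω with hDdef
  have hD : NullMeasurableSet D (volume : Measure (EuclideanSpace ℝ (Fin n))) :=
    nullMeasurable_openDualCone
  set μ : Measure (EuclideanSpace ℝ (Fin n)) := volume.restrict D with hμ
  set F : EuclideanSpace ℝ (Fin n) → EuclideanSpace ℝ (Fin n) → ℝ :=
    fun x a => Real.exp (-⟪a, x⟫) with hF
  set F' : EuclideanSpace ℝ (Fin n) → (EuclideanSpace ℝ (Fin n)) →L[ℝ] ℝ :=
    fun a => Real.exp (-⟪a, ω⟫) • (-(innerSL ℝ a)) with hF'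
  set bnd : EuclideanSpace ℝ (Fin n) → ℝ := fun a => ‖a‖ * Real.exp (-(r * ‖a‖)) with hbnd
  have hkey : ∀ x ∈ ball ω r, ∀ a ∈ D, r * ‖a‖ ≤ ⟪a, x⟫ := by
    intro x hx a ha
    refine inner_ge_of_mem_openDualCone hr ?_ ha
    intro z hz
    apply hsub
    rw [mem_ball] at hx hz ⊢
    calc dist z ω ≤ dist z x + dist x ω := dist_triangle _ _ _
      _ < r + r := add_lt_add hz hx
      _ = ε := by rw [hrdef]; ring
  have hderiv : ∀ (a x : EuclideanSpace ℝ (Fin n)),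
      HasFDerivAt (fun x => F x a) (Real.exp (-⟪a, x⟫) • (-(innerSL ℝ a))) x := by
    intro a x
    have h1 : HasFDerivAt (fun x : EuclideanSpace ℝ (Fin n) => -⟪a, x⟫) (-(innerSL ℝ a)) x :=
      ((innerSL ℝ a).hasFDerivAt).neg
    exact (Real.hasDerivAt_exp _).comp_hasFDerivAt x h1
  have main := hasFDerivAt_integral_of_dominated_loc_of_lip
    (F := F) (F' := F') (x₀ := ω) (bound := bnd) (μ := μ) (s := ball ω r) (ball_mem_nhds ω hr)
    (Eventually.of_forall fun x => Continuous.aestronglyMeasurable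
      (Real.continuous_exp.comp ((continuous_id.inner continuous_const).neg)))
    ?hint ?hmeas' ?hlip ?hbint
    (Eventually.of_forall fun a => hderiv a ω)
  case hint =>
    refine Integrable.mono' ((integrable_exp_norm hr).restrict (s := D))
      (Continuous.aestronglyMeasurable
        (Real.continuous_exp.comp ((continuous_id.inner continuous_const).neg))) ?_
    filter_upwards [ae_restrict_mem₀ hD] with a ha
    rw [Real.norm_eq_abs, Real.abs_exp, Real.exp_le_exp]
    have := hkey ω (mem_ball_self hr) a ha
    linarith
  case hmeas' =>
    apply Continuous.aestronglyMeasurable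
    exact (Real.continuous_exp.comp ((continuous_id.inner continuous_const).neg)).smul
      ((innerSL ℝ (E := EuclideanSpace ℝ (Fin n))).continuous.neg)
  case hlip =>
    filter_upwards [ae_restrict_mem₀ hD] with a ha
    refine Convex.lipschitzOnWith_of_nnnorm_hasFDerivWithin_le
      (f' := fun x => Real.exp (-⟪a, x⟫) • (-(innerSL ℝ a)))
      (fun x hx => (hderiv a x).hasFDerivWithinAt) (fun x hx => ?_) (convex_ball ω r)
    rw [← NNReal.coe_le_coe, coe_nnnorm, Real.coe_nnabs]
    rw [norm_smul, norm_neg, innerSL_apply_norm, Real.norm_eq_abs, Real.abs_exp]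
    have h1 := hkey x hx a ha
    have h2 : Real.exp (-⟪a, x⟫) ≤ Real.exp (-(r * ‖a‖)) := by
      rw [Real.exp_le_exp]; linarith
    calc Real.exp (-⟪a, x⟫) * ‖a‖ ≤ Real.exp (-(r * ‖a‖)) * ‖a‖ :=
          mul_le_mul_of_nonneg_right h2 (norm_nonneg a)
      _ = bnd a := by rw [hbnd]; ring
      _ ≤ |bnd a| := le_abs_self _
  case hbint => exact (integrable_norm_mul_exp hr).restrict
  have hEq : charFun Ω = fun x => ∫ a, F x a ∂μ := by
    funext x
    rw [_root_.charFun]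
    refine integral_congr_ae (Eventually.of_forall fun a => ?_)
    show Real.exp (-⟪x, a⟫) = Real.exp (-⟪a, x⟫)
    rw [real_inner_comm]
  rw [hEq]
  exact main.2.differentiableAt

end Aux4

theorem stmt_6 {n : ℕ} (Ω : Set (EuclideanSpace ℝ (Fin n)))
    (hne : Ω.Nonempty) (hopen : IsOpen Ω) (hconv : Convex ℝ Ω)
    (hcone : IsCone Ω) (hproper : closure Ω ∩ -closure Ω = {0})
    (ω : EuclideanSpace ℝ (Fin n)) (hω : ω ∈ Ω) :
    ⟪ω, dualMap Ω ω⟫ = (n : ℝ) := by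
  have hpos : 0 < charFun Ω ω := charFun_pos hne hopen hconv hcone hproper hω
  have hdiff : DifferentiableAt ℝ (charFun Ω) ω := differentiableAt_charFun hopen hω
  have hlog : DifferentiableAt ℝ (fun x => Real.log (charFun Ω x)) ω :=
    hdiff.log hpos.ne'
  set L : (EuclideanSpace ℝ (Fin n)) →L[ℝ] ℝ :=
    fderiv ℝ (fun x => Real.log (charFun Ω x)) ω with hL
  have hsm : HasDerivAt (fun t : ℝ => t • ω) ω 1 := by
    simpa using (hasDerivAt_id (1:ℝ)).smul_const ω
  have h1 : HasDerivAt (fun t : ℝ => Real.log (charFun Ω (t • ω))) (L ω) 1 := by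
    have hf' : HasFDerivAt (fun x => Real.log (charFun Ω x)) L ((1:ℝ) • ω) := by
      rw [one_smul]
      exact hlog.hasFDerivAt
    exact hf'.comp_hasDerivAt 1 hsm
  have h2 : (fun t : ℝ => Real.log (charFun Ω (t • ω))) =ᶠ[nhds 1]
      (fun t : ℝ => Real.log (charFun Ω ω) - n * Real.log t) := by
    filter_upwards [Ioi_mem_nhds (by norm_num : (0:ℝ) < 1)] with t ht
    have ht' : (0:ℝ) < t := ht
    rw [charFun_smul ω ht', Real.log_mul (by positivity) hpos.ne', Real.log_inv, Real.log_pow]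
    ring
  have h3 : HasDerivAt (fun t : ℝ => Real.log (charFun Ω ω) - n * Real.log t) (-(n:ℝ)) 1 := by
    have := ((Real.hasDerivAt_log one_ne_zero).const_mul (n:ℝ)).const_sub
      (Real.log (charFun Ω ω))
    simpa using this
  have h3' : HasDerivAt (fun t : ℝ => Real.log (charFun Ω (t • ω))) (-(n:ℝ)) 1 :=
    h3.congr_of_eventuallyEq h2
  have h4 : L ω = -(n:ℝ) := h1.unique h3'
  calc ⟪ω, dualMap Ω ω⟫
      = -⟪gradient (fun x => Real.log (charFun Ω x)) ω, ω⟫ := by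
        rw [dualMap, inner_neg_right, real_inner_comm]
    _ = -(L ω) := by
        rw [gradient, InnerProductSpace.toDual_symm_apply]
    _ = (n : ℝ) := by rw [h4, neg_neg]
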